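/- (Theorem 1, uniqueness of the stationary point.) Let p ≥ 3 be an integer. A point ω = (ω_1,…,ω_p) ∈ (0,1)^p satisfies ω_k = 1 - ∏_{i ≠ k} ω_i for every k ∈ {1,…,p} if and only if ω_k = α_p for every k ∈ {1,…,p}. Equivalently, the derived barypolygonal system t_k ↦ ∏_{i ≠ k}(1 - t_i) has exactly one fixed point in (0,1)^p, namely the point all of whose coordinates equal 1 - α_p. -/

import Mathlib

theorem fixed_point_characterization (p : ℕ) (hp : 3 ≤ p) (α : ℝ)
    (hα : α ∈ Set.Ioo (0 : ℝ) 1) (hroot : α ^ (p - 1) + α - 1 = 0)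
    (ω : Fin p → ℝ) (hω : ∀ k, ω k ∈ Set.Ioo (0 : ℝ) 1) :
    (∀ k : Fin p, ω k = 1 - ∏ i ∈ Finset.univ.erase k, ω i) ↔ (∀ k : Fin p, ω k = α) := by
  obtain ⟨hα0, hα1⟩ := hα
  have hcard : ∀ k : Fin p, (Finset.univ.erase k).card = p - 1 := by
    intro k
    rw [Finset.card_erase_of_mem (Finset.mem_univ k)]
    simp
  constructor
  · intro h
    set P := ∏ i, ω i with hP
    have hsq : ∀ k, ω k ^ 2 = ω k - P := by
      intro k
      have h1 : (∏ i ∈ Finset.univ.erase k, ω i) * ω k = P :=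
        Finset.prod_erase_mul _ _ (Finset.mem_univ k)
      have h2 := h k
      linear_combination (ω k) * h2 - h1
    have hdich : ∀ j k : Fin p, ω j = ω k ∨ ω j = 1 - ω k := by
      intro j k
      have hj := hsq j
      have hk := hsq k
      have hz : (ω j - ω k) * (ω j + ω k - 1) = 0 := by nlinarith
      rcases mul_eq_zero.1 hz with h' | h'
      · left; linarith
      · right; linarith
    set k0 : Fin p := ⟨0, by omega⟩ with hk0
    set r := ω k0 with hr
    have hr0 : 0 < r := (hω k0).1
    have hr1 : r < 1 := (hω k0).2
    have hall : ∀ i, ω i = r := by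
      by_contra hc
      push_neg at hc
      obtain ⟨j, hj⟩ := hc
      set S := Finset.univ.filter (fun i => ω i = r) with hS
      set T := Finset.univ.filter (fun i => ¬ ω i = r) with hT
      have hmem0 : k0 ∈ S := by simp [hS, hr]
      have hm1 : 1 ≤ S.card := Finset.card_pos.2 ⟨k0, hmem0⟩
      have hmemj : j ∈ T := by simp [hT, hj]
      have hn1 : 1 ≤ T.card := Finset.card_pos.2 ⟨j, hmemj⟩
      have hmn : S.card + T.card = p := by
        rw [hS, hT, Finset.card_filter_add_card_filter_not]
        simp
      have hprod1 : ∏ i ∈ S, ω i = r ^ S.card := by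
        rw [Finset.prod_congr rfl (fun i hi => by simp [hS] at hi; exact hi),
          Finset.prod_const]
      have hprod2 : ∏ i ∈ T, ω i = (1 - r) ^ T.card := by
        rw [Finset.prod_congr rfl (fun i hi => by
          simp [hT] at hi
          exact (hdich i k0).resolve_left hi), Finset.prod_const]
      have hsplit : (∏ i ∈ S, ω i) * (∏ i ∈ T, ω i) = P := by
        rw [hP, hS, hT]
        exact Finset.prod_filter_mul_prod_filter_not _ _ _
      have hPeq : r ^ S.card * (1 - r) ^ T.card = r - r ^ 2 := by
        have := hsq k0
        rw [hprod1, hprod2] at hsplit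
        linarith
      obtain ⟨m', hm'⟩ : ∃ m', S.card = 1 + m' := ⟨S.card - 1, by omega⟩
      obtain ⟨n', hn'⟩ : ∃ n', T.card = 1 + n' := ⟨T.card - 1, by omega⟩
      rw [hm', hn'] at hPeq
      have hkey : r ^ m' * (1 - r) ^ n' = 1 := by
        have hne : r * (1 - r) ≠ 0 := mul_ne_zero (ne_of_gt hr0) (ne_of_gt (by linarith))
        apply mul_left_cancel₀ hne
        have : r ^ (1 + m') * (1 - r) ^ (1 + n') =
            r * (1 - r) * (r ^ m' * (1 - r) ^ n') := by ring
        rw [← this, hPeq]; ring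
      have hsum : 1 ≤ m' + n' := by omega
      rcases Nat.eq_zero_or_pos m' with hm' | hm'
      · have hn' : n' ≠ 0 := by omega
        have : (1 - r) ^ n' < 1 := by
          apply pow_lt_one₀ (by linarith) (by linarith) hn'
        rw [hm'] at hkey
        simp at hkey
        linarith
      · have h1 : r ^ m' < 1 := pow_lt_one₀ (le_of_lt hr0) hr1 (by omega)
        have h2 : (1 - r) ^ n' ≤ 1 := pow_le_one₀ (by linarith) (by linarith)
        have h3 : (0:ℝ) < r ^ m' := pow_pos hr0 _
        nlinarith
    have hreq : r ^ (p - 1) + r - 1 = 0 := by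
      have h1 := h k0
      have h2 : ∏ i ∈ Finset.univ.erase k0, ω i = r ^ (p - 1) := by
        rw [Finset.prod_congr rfl (fun i _ => hall i), Finset.prod_const, hcard]
      rw [h2] at h1
      linarith
    have hrα : r = α := by
      rcases lt_trichotomy r α with hlt | heq | hgt
      · have : r ^ (p - 1) < α ^ (p - 1) :=
          pow_lt_pow_left₀ hlt (le_of_lt hr0) (by omega)
        linarith
      · exact heq
      · have : α ^ (p - 1) < r ^ (p - 1) :=
          pow_lt_pow_left₀ hgt (le_of_lt hα0) (by omega)
        linarith
    intro k
    rw [hall k, hrα]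
  · intro h k
    rw [h k]
    have h2 : ∏ i ∈ Finset.univ.erase k, ω i = α ^ (p - 1) := by
      rw [Finset.prod_congr rfl (fun i _ => h i), Finset.prod_const, hcard]
    rw [h2]
    linarith
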